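/- arXiv:1811.02262 — 6 statements merged into one kernel-verified Lean document; each statement's English description precedes it below -/
import Mathlib

section
/- Let H be a complex separable infinite-dimensional Hilbert space and T a bounded linear operator on H. If T is Cesàro-hypercyclic, then T satisfies a-Browder's theorem, i.e. σ_ea(T) = σ_ab(T). -/
open Filter Topology

noncomputable section

variable {E : Type*} [NormedAddCommGroup E] [NormedSpace ℂ E]

/-- `T` is Cesàro-hypercyclic: some orbit `{n⁻¹ Tⁿ x : n ≥ 1}` is dense. -/
def CesaroHypercyclic (T : E →L[ℂ] E) : Prop :=
  ∃ x : E, Dense {y : E | ∃ n : ℕ, 1 ≤ n ∧ y = ((n : ℂ))⁻¹ • (T ^ n) x}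

/-- `S` is upper semi-Fredholm: closed range and finite-dimensional kernel. -/
def IsUpperSemiFredholm (S : E →L[ℂ] E) : Prop :=
  IsClosed (LinearMap.range (S : E →ₗ[ℂ] E) : Set E) ∧ FiniteDimensional ℂ (LinearMap.ker (S : E →ₗ[ℂ] E))

/-- `S` is lower semi-Fredholm: closed range of finite codimension. -/
def IsLowerSemiFredholm (S : E →L[ℂ] E) : Prop :=
  IsClosed (LinearMap.range (S : E →ₗ[ℂ] E) : Set E) ∧ FiniteDimensional ℂ (E ⧸ LinearMap.range (S : E →ₗ[ℂ] E))

/-- `S` is semi-Fredholm. -/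
def IsSemiFredholm (S : E →L[ℂ] E) : Prop :=
  IsUpperSemiFredholm S ∨ IsLowerSemiFredholm S

/-- `S` is Fredholm. -/
def IsFredholm (S : E →L[ℂ] E) : Prop :=
  IsUpperSemiFredholm S ∧ IsLowerSemiFredholm S

/-- The index of a semi-Fredholm operator `S` is `≤ 0`:
`dim ker S ≤ codim ran S` (as cardinals, so that an infinite codimension is allowed). -/
def IndexLE0 (S : E →L[ℂ] E) : Prop :=
  Module.rank ℂ (LinearMap.ker (S : E →ₗ[ℂ] E)) ≤ Module.rank ℂ (E ⧸ LinearMap.range (S : E →ₗ[ℂ] E))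

/-- The index of a semi-Fredholm operator `S` is `≥ 0`:
`codim ran S ≤ dim ker S` (as cardinals, so that an infinite kernel is allowed). -/
def IndexGE0 (S : E →L[ℂ] E) : Prop :=
  Module.rank ℂ (E ⧸ LinearMap.range (S : E →ₗ[ℂ] E)) ≤ Module.rank ℂ (LinearMap.ker (S : E →ₗ[ℂ] E))

/-- `S` is Weyl: Fredholm of index zero. -/
def IsWeyl (S : E →L[ℂ] E) : Prop :=
  IsFredholm S ∧ Module.rank ℂ (LinearMap.ker (S : E →ₗ[ℂ] E)) = Module.rank ℂ (E ⧸ LinearMap.range (S : E →ₗ[ℂ] E))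

/-- `S` has finite ascent: the kernels of its powers stabilize. -/
def HasFiniteAscent (S : E →L[ℂ] E) : Prop :=
  ∃ n : ℕ, LinearMap.ker ((S ^ n : E →L[ℂ] E) : E →ₗ[ℂ] E) = LinearMap.ker ((S ^ (n + 1) : E →L[ℂ] E) : E →ₗ[ℂ] E)

/-- `S` has finite descent: the ranges of its powers stabilize. -/
def HasFiniteDescent (S : E →L[ℂ] E) : Prop :=
  ∃ n : ℕ, LinearMap.range ((S ^ n : E →L[ℂ] E) : E →ₗ[ℂ] E) = LinearMap.range ((S ^ (n + 1) : E →L[ℂ] E) : E →ₗ[ℂ] E)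

/-- `S` is Browder: Fredholm with finite ascent and finite descent. -/
def IsBrowder (S : E →L[ℂ] E) : Prop :=
  IsFredholm S ∧ HasFiniteAscent S ∧ HasFiniteDescent S

/-- `S` is bounded below. -/
def IsBoundedBelow (S : E →L[ℂ] E) : Prop :=
  ∃ c > (0 : ℝ), ∀ x : E, c * ‖x‖ ≤ ‖S x‖

/-- The Weyl spectrum `σ_w(T)`. -/
def weylSpectrum (T : E →L[ℂ] E) : Set ℂ :=
  {lam : ℂ | ¬ IsWeyl (T - lam • 1)}

/-- The Browder spectrum `σ_b(T)`. -/
def browderSpectrum (T : E →L[ℂ] E) : Set ℂ :=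
  {lam : ℂ | ¬ IsBrowder (T - lam • 1)}

/-- The approximate point spectrum `σ_a(T)`. -/
def approxSpectrum (T : E →L[ℂ] E) : Set ℂ :=
  {lam : ℂ | ¬ IsBoundedBelow (T - lam • 1)}

/-- The essential approximate point spectrum `σ_ea(T)`. -/
def essApproxSpectrum (T : E →L[ℂ] E) : Set ℂ :=
  {lam : ℂ | ¬ (IsUpperSemiFredholm (T - lam • 1) ∧ IndexLE0 (T - lam • 1))}

/-- The Browder essential approximate point spectrum `σ_ab(T)`. -/
def browderEssApproxSpectrum (T : E →L[ℂ] E) : Set ℂ :=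
  {lam : ℂ | ¬ (IsUpperSemiFredholm (T - lam • 1) ∧ IndexLE0 (T - lam • 1) ∧
    HasFiniteAscent (T - lam • 1))}

/-- `lam` is an isolated point of the set `s`. -/
def IsIsolatedPointOf (s : Set ℂ) (lam : ℂ) : Prop :=
  lam ∈ s ∧ ∃ ε > (0 : ℝ), ∀ mu ∈ s, ‖mu - lam‖ < ε → mu = lam

/-- `π₀₀(T)`: isolated points of the spectrum which are eigenvalues of finite multiplicity. -/
def pi00 (T : E →L[ℂ] E) : Set ℂ :=
  {lam : ℂ | IsIsolatedPointOf (spectrum ℂ T) lam ∧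
    LinearMap.ker ((T - lam • 1 : E →L[ℂ] E) : E →ₗ[ℂ] E) ≠ ⊥ ∧
      FiniteDimensional ℂ (LinearMap.ker ((T - lam • 1 : E →L[ℂ] E) : E →ₗ[ℂ] E))}

/-- `π₀₀ᵃ(T)`: isolated points of the approximate point spectrum which are eigenvalues of
finite multiplicity. -/
def pi00a (T : E →L[ℂ] E) : Set ℂ :=
  {lam : ℂ | IsIsolatedPointOf (approxSpectrum T) lam ∧
    LinearMap.ker ((T - lam • 1 : E →L[ℂ] E) : E →ₗ[ℂ] E) ≠ ⊥ ∧
      FiniteDimensional ℂ (LinearMap.ker ((T - lam • 1 : E →L[ℂ] E) : E →ₗ[ℂ] E))}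

/-- Weyl's theorem holds for `T`: `σ(T) \ σ_w(T) = π₀₀(T)`. -/
def WeylsTheorem (T : E →L[ℂ] E) : Prop :=
  spectrum ℂ T \ weylSpectrum T = pi00 T

/-- a-Weyl's theorem holds for `T`: `σ_a(T) \ σ_ea(T) = π₀₀ᵃ(T)`. -/
def AWeylsTheorem (T : E →L[ℂ] E) : Prop :=
  approxSpectrum T \ essApproxSpectrum T = pi00a T

/-- a-Browder's theorem holds for `T`: `σ_ea(T) = σ_ab(T)`. -/
def ABrowdersTheorem (T : E →L[ℂ] E) : Prop :=
  essApproxSpectrum T = browderEssApproxSpectrum T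

/-- The unit circle `∂D = {z : ‖z‖ = 1}`. -/
def unitCircleSet : Set ℂ := {z : ℂ | ‖z‖ = 1}

/-- Restriction of a continuous linear map to an invariant submodule. -/
def clmRestrict (S : E →L[ℂ] E) (M : Submodule ℂ E) (h : ∀ x ∈ M, S x ∈ M) : M →L[ℂ] M :=
  ⟨(S : E →ₗ[ℂ] E).restrict h,
    Continuous.subtype_mk (S.continuous.comp continuous_subtype_val) _⟩

/-- `S` is generalized upper semi-Fredholm: `E = M ⊕ N` for closed `S`-invariant
subspaces `M`, `N` with `S|_M` upper semi-Fredholm of index `≤ 0` and `S|_N`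
quasinilpotent. -/
def IsGeneralizedUpperSemiFredholm (S : E →L[ℂ] E) : Prop :=
  ∃ (M N : Submodule ℂ E), IsClosed (M : Set E) ∧ IsClosed (N : Set E) ∧ IsCompl M N ∧
    ∃ (hM : ∀ x ∈ M, S x ∈ M) (hN : ∀ x ∈ N, S x ∈ N),
      IsUpperSemiFredholm (clmRestrict S M hM) ∧ IndexLE0 (clmRestrict S M hM) ∧
      spectrum ℂ (clmRestrict S N hN) = {0}

/-- `σ₁(T)`: the complement of the set of `lam` around which `T - mu` is generalized
upper semi-Fredholm for all `mu ≠ lam` close enough to `lam`. -/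
def sigma1 (T : E →L[ℂ] E) : Set ℂ :=
  {lam : ℂ | ¬ ∃ ε > (0 : ℝ), ∀ mu : ℂ, 0 < ‖mu - lam‖ → ‖mu - lam‖ < ε →
    IsGeneralizedUpperSemiFredholm (T - mu • 1)}

end

variable {H : Type*} [NormedAddCommGroup H] [InnerProductSpace ℂ H] [CompleteSpace H]
  [TopologicalSpace.SeparableSpace H]


section Aux

variable {H : Type*} [NormedAddCommGroup H] [InnerProductSpace ℂ H] [CompleteSpace H]

/-- The set `{λⁿ c / n : n ≥ 1}` is never dense in `ℂ`. -/
lemma aux_not_dense (lam c : ℂ) :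
    ¬ Dense {z : ℂ | ∃ n : ℕ, 1 ≤ n ∧ z = ((n : ℂ))⁻¹ * (lam ^ n * c)} := by
  intro hd
  set S : Set ℂ := {z : ℂ | ∃ n : ℕ, 1 ≤ n ∧ z = ((n : ℂ))⁻¹ * (lam ^ n * c)} with hS
  have hnorm : ∀ n : ℕ, 1 ≤ n → ‖((n : ℂ))⁻¹ * (lam ^ n * c)‖
      = (↑n : ℝ)⁻¹ * (‖lam‖ ^ n * ‖c‖) := by
    intro n hn
    rw [norm_mul, norm_mul, norm_inv, norm_pow]
    simp
  by_cases hl : ‖lam‖ ≤ 1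
  · -- bounded case
    have hbd : S ⊆ Metric.closedBall 0 ‖c‖ := by
      rintro z ⟨n, hn, rfl⟩
      rw [Metric.mem_closedBall, dist_zero_right, hnorm n hn]
      have hn1 : (1 : ℝ) ≤ n := by exact_mod_cast hn
      have h1 : (↑n : ℝ)⁻¹ ≤ 1 := by
        rw [inv_le_one_iff₀]; right; exact hn1
      have h2 : ‖lam‖ ^ n ≤ 1 := pow_le_one₀ (norm_nonneg _) hl
      calc (↑n : ℝ)⁻¹ * (‖lam‖ ^ n * ‖c‖) ≤ 1 * (1 * ‖c‖) := by
            apply mul_le_mul h1 _ _ zero_le_one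
            · exact mul_le_mul h2 le_rfl (norm_nonneg _) zero_le_one
            · positivity
        _ = ‖c‖ := by ring
    have : ((‖c‖ + 1 : ℝ) : ℂ) ∈ closure S := hd _
    have hmem : ((‖c‖ + 1 : ℝ) : ℂ) ∈ Metric.closedBall (0 : ℂ) ‖c‖ :=
      closure_minimal hbd Metric.isClosed_closedBall this
    rw [Metric.mem_closedBall, dist_zero_right] at hmem
    have : ‖(((‖c‖ + 1 : ℝ)) : ℂ)‖ = ‖c‖ + 1 := by
      rw [Complex.norm_real, Real.norm_eq_abs, abs_of_nonneg (by positivity)]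
    linarith [hmem, this ▸ hmem]
  · push_neg at hl
    by_cases hc : c = 0
    · -- the set is {0}
      have hbd : S ⊆ {(0 : ℂ)} := by
        rintro z ⟨n, hn, rfl⟩; simp [hc]
      have : (1 : ℂ) ∈ closure S := hd _
      have hmem : (1 : ℂ) ∈ ({(0 : ℂ)} : Set ℂ) :=
        closure_minimal hbd isClosed_singleton this
      simp at hmem
    · -- growth case
      set b : ℝ := Real.sqrt ‖lam‖ with hbdef
      have hb0 : 0 ≤ b := Real.sqrt_nonneg _
      have hbsq : b * b = ‖lam‖ := Real.mul_self_sqrt (norm_nonneg _)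
      have hb1 : 1 < b := by
        nlinarith [hbsq, hb0]
      have hpow_ge : ∀ n : ℕ, 1 ≤ n → (b - 1) * n ≤ b ^ n := by
        intro n hn
        have := one_add_mul_le_pow (a := b - 1) (by linarith) n
        have h' : 1 + (n : ℝ) * (b - 1) ≤ b ^ n := by
          simpa using this
        nlinarith [h']
      -- eventually the norms exceed 1
      have htend : Filter.Tendsto (fun n : ℕ => b ^ n) Filter.atTop Filter.atTop :=
        tendsto_pow_atTop_atTop_of_one_lt hb1
      have hcpos : 0 < ‖c‖ := norm_pos_iff.mpr hc
      obtain ⟨N, hN⟩ := (htend.eventually_gt_atTop (((b - 1) * ‖c‖)⁻¹)).exists_forall_of_atTop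
      have hbig : ∀ n : ℕ, 1 ≤ n → N ≤ n → 1 < (↑n : ℝ)⁻¹ * (‖lam‖ ^ n * ‖c‖) := by
        intro n h1 h2
        have hnpos : (0 : ℝ) < n := by exact_mod_cast h1
        have hb1' : 0 < b - 1 := by linarith
        have hkey : 1 < (b - 1) * ‖c‖ * b ^ n := by
          have hlt := hN n h2
          have hpos : (0 : ℝ) < (b - 1) * ‖c‖ := by positivity
          calc (1 : ℝ) = ((b - 1) * ‖c‖) * ((b - 1) * ‖c‖)⁻¹ :=
                (mul_inv_cancel₀ hpos.ne').symm
            _ < ((b - 1) * ‖c‖) * b ^ n := mul_lt_mul_of_pos_left hlt hpos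
        have hpow : ‖lam‖ ^ n = b ^ n * b ^ n := by
          rw [← hbsq, mul_pow]
        rw [hpow]
        have h3 : (b - 1) * n ≤ b ^ n := hpow_ge n h1
        have hbn : 0 < b ^ n := by positivity
        have h4 : (b - 1) * (b ^ n * ‖c‖) ≤ (↑n : ℝ)⁻¹ * (b ^ n * b ^ n * ‖c‖) := by
          have hne : (↑n : ℝ) ≠ 0 := hnpos.ne'
          have hh := mul_le_mul_of_nonneg_right h3
            (show (0 : ℝ) ≤ b ^ n * ‖c‖ * (↑n : ℝ)⁻¹ by positivity)
          calc (b - 1) * (b ^ n * ‖c‖)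
              = (b - 1) * ↑n * (b ^ n * ‖c‖ * (↑n : ℝ)⁻¹) := by
                field_simp
            _ ≤ b ^ n * (b ^ n * ‖c‖ * (↑n : ℝ)⁻¹) := hh
            _ = (↑n : ℝ)⁻¹ * (b ^ n * b ^ n * ‖c‖) := by ring
        nlinarith [hkey, h4]
      -- the finitely many small elements
      set F : Set ℂ := (fun n : ℕ => ((n : ℂ))⁻¹ * (lam ^ n * c)) '' (Set.Iio N) with hF
      have hFfin : F.Finite := (Set.finite_Iio N).image _
      have hsub : Metric.ball (0 : ℂ) 1 ∩ S ⊆ F := by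
        rintro z ⟨hz, n, hn, rfl⟩
        rw [Metric.mem_ball, dist_zero_right] at hz
        by_cases hnN : N ≤ n
        · exfalso
          have := hbig n hn hnN
          rw [hnorm n hn] at hz
          linarith
        · exact ⟨n, by simpa using Nat.lt_of_not_le hnN, rfl⟩
      have hball : Metric.ball (0 : ℂ) 1 ⊆ F := by
        intro z hz
        have h1 : z ∈ closure (Metric.ball (0 : ℂ) 1 ∩ S) :=
          hd.open_subset_closure_inter Metric.isOpen_ball hz
        have h2 : z ∈ closure F := closure_mono hsub h1
        rwa [hFfin.isClosed.closure_eq] at h2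
      -- but the ball is infinite
      have hinj : Set.InjOn (fun t : ℝ => (t : ℂ)) (Set.Ioo (0 : ℝ) 1) :=
        fun a _ b _ h => Complex.ofReal_injective h
      have hIooInf : (Set.Ioo (0 : ℝ) 1).Infinite := Set.Ioo_infinite one_pos
      have himg : ((fun t : ℝ => (t : ℂ)) '' Set.Ioo (0 : ℝ) 1) ⊆ Metric.ball (0 : ℂ) 1 := by
        rintro z ⟨t, ht, rfl⟩
        rw [Metric.mem_ball, dist_zero_right, Complex.norm_real, Real.norm_eq_abs,
          abs_of_nonneg ht.1.le]
        exact ht.2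
      have : F.Infinite :=
        ((hIooInf.image hinj).mono (himg.trans hball))
      exact this hFfin

/-- The key step: for a Cesàro-hypercyclic operator, upper semi-Fredholm + index ≤ 0
forces invertibility, in particular finite ascent. -/
lemma aux_finite_ascent (T : H →L[ℂ] H) (hT : CesaroHypercyclic T) (lam : ℂ)
    (hU : IsUpperSemiFredholm (T - lam • 1)) (hI : IndexLE0 (T - lam • 1)) :
    HasFiniteAscent (T - lam • 1) := by
  set Q : H →L[ℂ] H := T - lam • 1 with hQ
  have happ : ∀ v : H, Q v = T v - lam • v := by
    intro v; simp [hQ]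
  -- Step 1: the range of Q is all of H
  have hrange : LinearMap.range (Q : H →ₗ[ℂ] H) = ⊤ := by
    by_contra hne
    have hKcomp : CompleteSpace (LinearMap.range (Q : H →ₗ[ℂ] H)) := hU.1.completeSpace_coe
    have horth : (LinearMap.range (Q : H →ₗ[ℂ] H))ᗮ ≠ ⊥ := fun h =>
      hne (Submodule.orthogonal_eq_bot_iff.mp h)
    obtain ⟨y, hy, hy0⟩ := Submodule.exists_mem_ne_zero_of_ne_bot horth
    -- inner products against y intertwine T with multiplication by lam
    have hfT : ∀ v : H, (inner ℂ y (T v) : ℂ) = lam * inner ℂ y v := by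
      intro v
      have h0 : (inner ℂ (Q v) y : ℂ) = 0 :=
        (Submodule.mem_orthogonal _ y).mp hy _ (LinearMap.mem_range_self _ v)
      have h0' : (inner ℂ y (Q v) : ℂ) = 0 := by
        rw [← inner_conj_symm, h0, map_zero]
      rw [happ, inner_sub_right, inner_smul_right] at h0'
      linear_combination h0'
    have hfTn : ∀ (n : ℕ) (v : H), (inner ℂ y ((T ^ n) v) : ℂ) = lam ^ n * inner ℂ y v := by
      intro n
      induction n with
      | zero => intro v; simp
      | succ k ih =>
        intro v
        have : (T ^ (k + 1)) v = (T ^ k) (T v) := by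
          rw [pow_succ]; rfl
        rw [this, ih (T v), hfT v, pow_succ]; ring
    obtain ⟨x0, hx0⟩ := hT
    set c : ℂ := inner ℂ y x0 with hc
    -- the image of the dense orbit under ⟪y, ·⟫ is dense
    have hyy : (inner ℂ y y : ℂ) ≠ 0 := inner_self_ne_zero.mpr hy0
    have hdense : Dense {z : ℂ | ∃ n : ℕ, 1 ≤ n ∧ z = ((n : ℂ))⁻¹ * (lam ^ n * c)} := by
      rw [dense_iff_inter_open]
      intro U hUopen hUne
      obtain ⟨z, hz⟩ := hUne
      -- the preimage under ⟪y, ·⟫ is open and nonempty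
      set f : H →L[ℂ] ℂ := (innerSL ℂ) y with hf
      have hfa : ∀ v : H, f v = inner ℂ y v := fun v => rfl
      have hpre_open : IsOpen (f ⁻¹' U) := hUopen.preimage f.continuous
      have hpre_ne : (f ⁻¹' U).Nonempty := by
        refine ⟨(z / inner ℂ y y) • y, ?_⟩
        have : f ((z / inner ℂ y y) • y) = z := by
          rw [hfa, inner_smul_right, div_mul_cancel₀ _ hyy]
        simpa only [Set.mem_preimage, this] using hz
      obtain ⟨p, hpU, hpD⟩ := (dense_iff_inter_open.mp hx0) _ hpre_open hpre_ne
      obtain ⟨n, hn, rfl⟩ := hpD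
      refine ⟨f (((n : ℂ))⁻¹ • (T ^ n) x0), hpU, n, hn, ?_⟩
      rw [hfa, inner_smul_right, hfTn n x0]
    exact aux_not_dense lam c hdense
  -- Step 2: the quotient is trivial, so the kernel is trivial
  have hqsub : Subsingleton (H ⧸ LinearMap.range (Q : H →ₗ[ℂ] H)) :=
    Submodule.Quotient.subsingleton_iff.mpr hrange
  have hqrank : Module.rank ℂ (H ⧸ LinearMap.range (Q : H →ₗ[ℂ] H)) = 0 := rank_subsingleton' ℂ _
  have hkrank : Module.rank ℂ (LinearMap.ker (Q : H →ₗ[ℂ] H)) = 0 :=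
    le_antisymm (hqrank ▸ hI) zero_le
  have hksub : Subsingleton (LinearMap.ker (Q : H →ₗ[ℂ] H)) := rank_zero_iff.mp hkrank
  have hker : LinearMap.ker (Q : H →ₗ[ℂ] H) = ⊥ := Submodule.eq_bot_of_subsingleton
  refine ⟨0, ?_⟩
  rw [pow_zero, pow_one, hker]
  ext v
  simp [LinearMap.mem_ker]

end Aux

theorem cesaroHypercyclic_aBrowder
    (hinf : ¬ FiniteDimensional ℂ H) (T : H →L[ℂ] H) (hT : CesaroHypercyclic T) :
    essApproxSpectrum T = browderEssApproxSpectrum T := by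
  ext lam
  simp only [essApproxSpectrum, browderEssApproxSpectrum, Set.mem_setOf_eq]
  constructor
  · intro h hab
    exact h ⟨hab.1, hab.2.1⟩
  · intro h hab
    exact h ⟨hab.1, hab.2, aux_finite_ascent T hT lam hab.1 hab.2⟩
end

section
/- Let H be a complex separable infinite-dimensional Hilbert space and T a bounded linear operator on H. If T is Cesàro-hypercyclic, then the Hilbert-space adjoint T* satisfies a-Browder's theorem, i.e. σ_ea(T*) = σ_ab(T*). -/
open Filter Topology

variable {H : Type*} [NormedAddCommGroup H] [InnerProductSpace ℂ H] [CompleteSpace H]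
  [TopologicalSpace.SeparableSpace H]

/-- The adjoint of a Cesàro-hypercyclic operator has no eigenvalues. -/
theorem ker_adjoint_sub_eq_bot (T : H →L[ℂ] H) (hT : CesaroHypercyclic T) (lam : ℂ) :
    LinearMap.ker ((ContinuousLinearMap.adjoint T - lam • 1 : H →L[ℂ] H) : H →ₗ[ℂ] H) = ⊥ := by
  rw [Submodule.eq_bot_iff]
  intro y hy
  by_contra hy0
  have hA : ContinuousLinearMap.adjoint T y = lam • y := by
    have h1 := (LinearMap.mem_ker).mp hy
    have h2 : ContinuousLinearMap.adjoint T y - lam • y = 0 := by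
      simpa using h1
    have := sub_eq_zero.mp h2
    simpa using this
  obtain ⟨x, hx⟩ := hT
  set μ : ℂ := starRingEnd ℂ lam with hμ
  set c : ℂ := @inner ℂ _ _ y x with hc
  -- inner products along the orbit
  have horbit : ∀ n : ℕ, @inner ℂ _ _ y ((T ^ n) x) = μ ^ n * c := by
    intro n
    induction n with
    | zero => simp [hc]
    | succ n ih =>
      have hpow : (T ^ (n + 1)) x = T ((T ^ n) x) := by
        rw [pow_succ']; rfl
      rw [hpow, ← ContinuousLinearMap.adjoint_inner_left, hA, inner_smul_left, ih,
        pow_succ]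
      ring
  -- the scalar orbit {n⁻¹ μⁿ c : n ≥ 1} is dense in ℂ
  have key : ∀ w : ℂ, ∀ ε : ℝ, 0 < ε →
      ∃ n : ℕ, 1 ≤ n ∧ ‖((n : ℂ))⁻¹ * μ ^ n * c - w‖ < ε := by
    intro w ε hε
    have hyy : (@inner ℂ _ _ y y) ≠ 0 := by
      simpa [inner_self_eq_zero] using hy0
    set z : H := (w / @inner ℂ _ _ y y) • y with hz
    have hfz : @inner ℂ _ _ y z = w := by
      rw [hz, inner_smul_right]
      field_simp
    have hε' : 0 < ε / (‖y‖ + 1) := by positivity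
    obtain ⟨s, hs_mem, hs_dist⟩ := hx.exists_dist_lt z hε'
    obtain ⟨n, hn1, hsn⟩ := hs_mem
    refine ⟨n, hn1, ?_⟩
    have hinner_s : @inner ℂ _ _ y s = ((n : ℂ))⁻¹ * μ ^ n * c := by
      rw [hsn, inner_smul_right, horbit]
      ring
    have hdiff : ((n : ℂ))⁻¹ * μ ^ n * c - w = @inner ℂ _ _ y (s - z) := by
      rw [inner_sub_right, hinner_s, hfz]
    rw [hdiff]
    calc ‖@inner ℂ _ _ y (s - z)‖ ≤ ‖y‖ * ‖s - z‖ := norm_inner_le_norm _ _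
      _ = ‖y‖ * dist s z := by rw [dist_eq_norm]
      _ = ‖y‖ * dist z s := by rw [dist_comm]
      _ < (‖y‖ + 1) * (ε / (‖y‖ + 1)) := by
          apply mul_lt_mul' (by linarith) hs_dist dist_nonneg (by positivity)
      _ = ε := by field_simp
  -- norm of orbit elements
  have hnorm : ∀ n : ℕ, 1 ≤ n → ‖((n : ℂ))⁻¹ * μ ^ n * c‖ = ((n : ℝ))⁻¹ * ‖μ‖ ^ n * ‖c‖ := by
    intro n hn
    simp [norm_mul, norm_pow]
  by_cases hcase : ‖μ‖ ≤ 1 ∨ c = 0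
  · -- orbit norms are bounded by ‖c‖ : contradiction with density
    have hbound : ∀ n : ℕ, 1 ≤ n → ‖((n : ℂ))⁻¹ * μ ^ n * c‖ ≤ ‖c‖ := by
      intro n hn
      rw [hnorm n hn]
      rcases hcase with h | h
      · have h1 : ((n : ℝ))⁻¹ ≤ 1 := by
          rw [inv_le_one_iff₀]; right; exact_mod_cast hn
        have h2 : ‖μ‖ ^ n ≤ 1 := pow_le_one₀ (norm_nonneg _) h
        calc ((n : ℝ))⁻¹ * ‖μ‖ ^ n * ‖c‖ ≤ 1 * 1 * ‖c‖ := by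
              apply mul_le_mul (mul_le_mul h1 h2 (by positivity) (by norm_num))
                le_rfl (norm_nonneg _) (by norm_num)
          _ = ‖c‖ := by ring
      · simp [h]
    obtain ⟨n, hn1, hlt⟩ := key ((‖c‖ + 2 : ℝ) : ℂ) 1 one_pos
    have h1 : ‖(((‖c‖ + 2 : ℝ) : ℂ))‖ = ‖c‖ + 2 := by
      rw [Complex.norm_real, Real.norm_eq_abs, abs_of_nonneg (by positivity)]
    have h2 : ‖(((‖c‖ + 2 : ℝ) : ℂ))‖ - ‖((n : ℂ))⁻¹ * μ ^ n * c‖ ≤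
        ‖((n : ℂ))⁻¹ * μ ^ n * c - ((‖c‖ + 2 : ℝ) : ℂ)‖ := by
      have := norm_sub_norm_le (((‖c‖ + 2 : ℝ) : ℂ)) (((n : ℂ))⁻¹ * μ ^ n * c)
      calc ‖(((‖c‖ + 2 : ℝ) : ℂ))‖ - ‖((n : ℂ))⁻¹ * μ ^ n * c‖
          ≤ ‖(((‖c‖ + 2 : ℝ) : ℂ)) - ((n : ℂ))⁻¹ * μ ^ n * c‖ := this
        _ = ‖((n : ℂ))⁻¹ * μ ^ n * c - ((‖c‖ + 2 : ℝ) : ℂ)‖ := norm_sub_rev _ _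
    have := hbound n hn1
    rw [h1] at h2
    linarith
  · -- ‖μ‖ > 1 and c ≠ 0 : orbit norms are bounded below by δ > 0
    push_neg at hcase
    obtain ⟨hμ1, hc0⟩ := hcase
    set δ : ℝ := ‖c‖ * (‖μ‖ - 1) with hδ
    have hδpos : 0 < δ := by
      apply mul_pos (norm_pos_iff.mpr hc0)
      linarith
    have hlow : ∀ n : ℕ, 1 ≤ n → δ ≤ ‖((n : ℂ))⁻¹ * μ ^ n * c‖ := by
      intro n hn
      rw [hnorm n hn]
      have hbern : 1 + (n : ℝ) * (‖μ‖ - 1) ≤ ‖μ‖ ^ n := by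
        have := one_add_mul_le_pow (a := ‖μ‖ - 1) (by linarith) n
        simpa using this
      have hnpos : (0 : ℝ) < n := by exact_mod_cast hn
      have h1 : (n : ℝ) * (‖μ‖ - 1) ≤ ‖μ‖ ^ n := by linarith
      have h2 : ((n : ℝ))⁻¹ * ((n : ℝ) * (‖μ‖ - 1)) ≤ ((n : ℝ))⁻¹ * ‖μ‖ ^ n := by
        apply mul_le_mul_of_nonneg_left h1 (by positivity)
      have h3 : ((n : ℝ))⁻¹ * ((n : ℝ) * (‖μ‖ - 1)) = ‖μ‖ - 1 := by
        field_simp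
      rw [h3] at h2
      calc δ = (‖μ‖ - 1) * ‖c‖ := by rw [hδ]; ring
        _ ≤ ((n : ℝ))⁻¹ * ‖μ‖ ^ n * ‖c‖ := by
            apply mul_le_mul_of_nonneg_right h2 (norm_nonneg _)
    obtain ⟨n, hn1, hlt⟩ := key ((δ / 2 : ℝ) : ℂ) (δ / 2) (by positivity)
    have h1 : ‖(((δ / 2 : ℝ) : ℂ))‖ = δ / 2 := by
      rw [Complex.norm_real, Real.norm_eq_abs, abs_of_nonneg (by positivity)]
    have h2 : ‖((n : ℂ))⁻¹ * μ ^ n * c‖ - ‖(((δ / 2 : ℝ) : ℂ))‖ ≤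
        ‖((n : ℂ))⁻¹ * μ ^ n * c - ((δ / 2 : ℝ) : ℂ)‖ := norm_sub_norm_le _ _
    have := hlow n hn1
    rw [h1] at h2
    linarith

theorem cesaroHypercyclic_adjoint_aBrowder
    (hinf : ¬ FiniteDimensional ℂ H) (T : H →L[ℂ] H) (hT : CesaroHypercyclic T) :
    essApproxSpectrum (ContinuousLinearMap.adjoint T) =
      browderEssApproxSpectrum (ContinuousLinearMap.adjoint T) := by
  have hker := ker_adjoint_sub_eq_bot T hT
  ext lam
  simp only [essApproxSpectrum, browderEssApproxSpectrum, Set.mem_setOf_eq]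
  have hascent : HasFiniteAscent (ContinuousLinearMap.adjoint T - lam • 1) := by
    refine ⟨0, ?_⟩
    rw [pow_zero, pow_one]
    have h1 : LinearMap.ker ((1 : H →L[ℂ] H) : H →ₗ[ℂ] H) = ⊥ := by
      ext z; simp
    rw [h1, hker lam]
  constructor
  · intro h hcon
    exact h ⟨hcon.1, hcon.2.1⟩
  · intro h hcon
    exact h ⟨hcon.1, hcon.2, hascent⟩
end

section
/- Let H be a complex separable infinite-dimensional Hilbert space and T a bounded linear operator on H. If T is Cesàro-hypercyclic, then the Hilbert-space adjoint T* has empty point spectrum: for every λ ∈ ℂ, ker(T* − λ) = {0}. -/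
open Filter Topology

variable {H : Type*} [NormedAddCommGroup H] [InnerProductSpace ℂ H] [CompleteSpace H]
  [TopologicalSpace.SeparableSpace H]

theorem cesaroHypercyclic_adjoint_pointSpectrum_empty
    (hinf : ¬ FiniteDimensional ℂ H) (T : H →L[ℂ] H) (hT : CesaroHypercyclic T) :
    ∀ lam : ℂ, LinearMap.ker ((ContinuousLinearMap.adjoint T - lam • 1 : H →L[ℂ] H) : H →ₗ[ℂ] H) = ⊥ := by
  intro lam
  by_contra hker
  obtain ⟨y, hy_mem, hy0⟩ := Submodule.ne_bot_iff _ |>.mp hker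
  have hy : ContinuousLinearMap.adjoint T y = lam • y := by
    have h : (ContinuousLinearMap.adjoint T - lam • 1) y = 0 := hy_mem
    rwa [ContinuousLinearMap.sub_apply, ContinuousLinearMap.smul_apply,
      ContinuousLinearMap.one_apply, sub_eq_zero] at h
  obtain ⟨x, hD⟩ := hT
  set μ : ℂ := starRingEnd ℂ lam with hμ
  set c : ℂ := inner ℂ y x with hc
  have hpow : ∀ n : ℕ, ((ContinuousLinearMap.adjoint T) ^ n) y = lam ^ n • y := by
    intro n
    induction n with
    | zero => simp
    | succ n ih =>
        rw [pow_succ, pow_succ, ContinuousLinearMap.mul_apply, hy, map_smul, ih,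
          smul_smul, mul_comm]
  have hinner : ∀ n : ℕ, (inner ℂ y ((T ^ n) x) : ℂ) = μ ^ n * c := by
    intro n
    have hadj : ContinuousLinearMap.adjoint (T ^ n) = (ContinuousLinearMap.adjoint T) ^ n := by
      rw [← ContinuousLinearMap.star_eq_adjoint, ← ContinuousLinearMap.star_eq_adjoint, star_pow]
    calc (inner ℂ y ((T ^ n) x) : ℂ)
        = inner ℂ (ContinuousLinearMap.adjoint (T ^ n) y) x :=
          (ContinuousLinearMap.adjoint_inner_left _ _ _).symm
      _ = inner ℂ ((lam ^ n) • y) x := by rw [hadj, hpow]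
      _ = μ ^ n * c := by rw [inner_smul_left, map_pow]
  set f : H → ℂ := fun z => (inner ℂ y z : ℂ) with hf
  have hfc : Continuous f := continuous_const.inner continuous_id
  have hfsurj : Function.Surjective f := by
    intro w
    refine ⟨(w / (inner ℂ y y : ℂ)) • y, ?_⟩
    have hyy : (inner ℂ y y : ℂ) ≠ 0 := by
      simpa [inner_self_eq_zero] using hy0
    simp [hf, inner_smul_right, div_mul_cancel₀, hyy, hy0]
  have hDf : Dense (f '' {z : H | ∃ n : ℕ, 1 ≤ n ∧ z = ((n : ℂ))⁻¹ • (T ^ n) x}) := by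
    intro w
    obtain ⟨z, rfl⟩ := hfsurj w
    exact image_closure_subset_closure_image hfc ⟨z, by rw [hD.closure_eq]; trivial, rfl⟩
  have hform : ∀ p ∈ f '' {z : H | ∃ n : ℕ, 1 ≤ n ∧ z = ((n : ℂ))⁻¹ • (T ^ n) x},
      ∃ n : ℕ, 1 ≤ n ∧ p = ((n : ℂ))⁻¹ * (μ ^ n * c) := by
    rintro p ⟨z, ⟨n, hn1, rfl⟩, rfl⟩
    exact ⟨n, hn1, by rw [hf]; simp only [inner_smul_right, hinner n]⟩
  -- compute norms
  have hnorm : ∀ (n : ℕ), 1 ≤ n → ‖((n : ℂ))⁻¹ * (μ ^ n * c)‖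
      = ((n : ℝ))⁻¹ * (‖μ‖ ^ n * ‖c‖) := by
    intro n hn
    simp [norm_mul, norm_inv, norm_pow]
  by_cases hc0 : c = 0
  · -- all points are 0; ball around 1 of radius 1/2 misses the set
    obtain ⟨p, hpball, hpS⟩ := Metric.dense_iff.mp hDf 1 (1/2) (by norm_num)
    obtain ⟨n, hn1, rfl⟩ := hform p hpS
    rw [hc0] at hpball
    simp [Metric.mem_ball] at hpball
    norm_num at hpball
  · rcases le_or_gt ‖μ‖ 1 with hle | hgt
    · -- bounded case: all points have norm ≤ ‖c‖
      obtain ⟨p, hpball, hpS⟩ := Metric.dense_iff.mp hDf ((‖c‖ + 2 : ℝ) : ℂ) 1 one_pos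
      obtain ⟨n, hn1, rfl⟩ := hform p hpS
      have hnp : ‖((n : ℂ))⁻¹ * (μ ^ n * c)‖ ≤ ‖c‖ := by
        rw [hnorm n hn1]
        have h1 : ((n : ℝ))⁻¹ ≤ 1 := by
          rw [inv_le_one_iff₀]; right; exact_mod_cast hn1
        have h2 : ‖μ‖ ^ n ≤ 1 := pow_le_one₀ (norm_nonneg _) hle
        calc ((n : ℝ))⁻¹ * (‖μ‖ ^ n * ‖c‖) ≤ 1 * (1 * ‖c‖) := by
              apply mul_le_mul h1 (mul_le_mul h2 le_rfl (norm_nonneg _) zero_le_one)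
                (by positivity) zero_le_one
          _ = ‖c‖ := by ring
      have hw0 : ‖(((‖c‖ + 2 : ℝ) : ℂ))‖ = ‖c‖ + 2 := by
        rw [Complex.norm_real, Real.norm_eq_abs, abs_of_nonneg (by positivity)]
      have hd : (1 : ℝ) ≤ dist (((n : ℂ))⁻¹ * (μ ^ n * c)) ((‖c‖ + 2 : ℝ) : ℂ) := by
        have := norm_sub_norm_le ((((‖c‖ + 2 : ℝ)) : ℂ)) (((n : ℂ))⁻¹ * (μ ^ n * c))
        rw [dist_eq_norm, ← norm_neg]
        have h3 : ‖(((‖c‖ + 2 : ℝ) : ℂ)) - ((n : ℂ))⁻¹ * (μ ^ n * c)‖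
            ≥ (‖c‖ + 2) - ‖c‖ := by
          calc ‖(((‖c‖ + 2 : ℝ) : ℂ)) - ((n : ℂ))⁻¹ * (μ ^ n * c)‖
              ≥ ‖(((‖c‖ + 2 : ℝ) : ℂ))‖ - ‖((n : ℂ))⁻¹ * (μ ^ n * c)‖ := this
            _ ≥ (‖c‖ + 2) - ‖c‖ := by rw [hw0]; linarith
        simp only [neg_sub]
        linarith
      rw [Metric.mem_ball] at hpball
      linarith
    · -- ‖μ‖ > 1 and c ≠ 0: all points bounded away from 0
      have hcpos : 0 < ‖c‖ := norm_pos_iff.mpr hc0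
      set a : ℝ := ‖μ‖ - 1 with ha
      have hapos : 0 < a := by rw [ha]; linarith
      obtain ⟨p, hpball, hpS⟩ := Metric.dense_iff.mp hDf 0 (a * ‖c‖) (by positivity)
      obtain ⟨n, hn1, rfl⟩ := hform p hpS
      have hlow : a * ‖c‖ ≤ ‖((n : ℂ))⁻¹ * (μ ^ n * c)‖ := by
        rw [hnorm n hn1]
        have hnpos : (0 : ℝ) < (n : ℝ) := by exact_mod_cast hn1
        have hpow : (n : ℝ) * a ≤ ‖μ‖ ^ n := by
          have := one_add_mul_le_pow (a := a) (by linarith) n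
          have hμn : (1 + a) ^ n = ‖μ‖ ^ n := by rw [ha]; ring_nf
          nlinarith
        have : a ≤ ((n : ℝ))⁻¹ * ‖μ‖ ^ n := by
          rw [le_inv_mul_iff₀ hnpos]
          linarith [hpow]
        calc a * ‖c‖ ≤ (((n : ℝ))⁻¹ * ‖μ‖ ^ n) * ‖c‖ :=
              mul_le_mul_of_nonneg_right this (norm_nonneg _)
          _ = ((n : ℝ))⁻¹ * (‖μ‖ ^ n * ‖c‖) := by ring
      rw [Metric.mem_ball, dist_zero_right] at hpball
      linarith
end

section
/- Let H be a complex separable infinite-dimensional Hilbert space and T a Cesàro-hypercyclic bounded linear operator on H. Then T satisfies a-Weyl's theorem if and only if π₀₀(T) = ∅. -/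
open Filter Topology

open scoped InnerProductSpace

section AuxOrbit

lemma bounded_not_dense {S : Set ℂ} {B : ℝ} (hB : ∀ z ∈ S, ‖z‖ ≤ B) : ¬ Dense S := by
  intro hd
  have hB0 : 0 ≤ B ∨ S = ∅ := by
    rcases Set.eq_empty_or_nonempty S with h | ⟨z, hz⟩
    · exact Or.inr h
    · exact Or.inl (le_trans (norm_nonneg z) (hB z hz))
  rcases hB0 with hB0 | hemp
  · obtain ⟨z, hz, hdz⟩ := Metric.mem_closure_iff.1 (hd ((B + 1 : ℝ) : ℂ)) 1 one_pos
    have h1 : (1 : ℝ) ≤ dist ((B + 1 : ℝ) : ℂ) z := by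
      have hzB := hB z hz
      have : ‖((B + 1 : ℝ) : ℂ)‖ = B + 1 := by
        rw [Complex.norm_real, Real.norm_eq_abs, abs_of_pos]; linarith
      calc (1 : ℝ) = (B + 1) - B := by ring
        _ ≤ ‖((B + 1 : ℝ) : ℂ)‖ - ‖z‖ := by rw [this]; linarith
        _ ≤ ‖((B + 1 : ℝ) : ℂ) - z‖ := norm_sub_norm_le _ _
        _ = dist _ z := (dist_eq_norm _ _).symm
    linarith
  · subst hemp
    obtain ⟨z, hz, -⟩ := Metric.mem_closure_iff.1 (hd 0) 1 one_pos
    exact hz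

lemma orbit_scalar_not_dense (μ c : ℂ) :
    ¬ Dense {z : ℂ | ∃ n : ℕ, 1 ≤ n ∧ z = ((n : ℂ))⁻¹ * (μ ^ n * c)} := by
  set S : Set ℂ := {z : ℂ | ∃ n : ℕ, 1 ≤ n ∧ z = ((n : ℂ))⁻¹ * (μ ^ n * c)} with hS
  have hnorm : ∀ z ∈ S, ∃ n : ℕ, 1 ≤ n ∧ ‖z‖ = (n : ℝ)⁻¹ * (‖μ‖ ^ n * ‖c‖) := by
    rintro z ⟨n, hn, rfl⟩
    refine ⟨n, hn, ?_⟩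
    rw [norm_mul, norm_mul, norm_inv, norm_pow, Complex.norm_natCast]
  by_cases hμ : ‖μ‖ ≤ 1
  · -- bounded case
    refine bounded_not_dense (B := ‖c‖) ?_
    intro z hz
    obtain ⟨n, hn, he⟩ := hnorm z hz
    rw [he]
    have h1 : ‖μ‖ ^ n ≤ 1 := pow_le_one₀ (norm_nonneg μ) hμ
    have h2 : (n : ℝ)⁻¹ ≤ 1 := by
      rw [inv_le_one_iff₀]; right; exact_mod_cast hn
    calc (n : ℝ)⁻¹ * (‖μ‖ ^ n * ‖c‖) ≤ 1 * (1 * ‖c‖) := by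
          apply mul_le_mul h2 (mul_le_mul h1 le_rfl (norm_nonneg c) zero_le_one) ?_ zero_le_one
          positivity
      _ = ‖c‖ := by ring
  · push_neg at hμ
    by_cases hc : c = 0
    · refine bounded_not_dense (B := 0) ?_
      intro z hz
      obtain ⟨n, hn, he⟩ := hnorm z hz
      rw [he, hc]; simp
    · -- unbounded, gap argument
      set b := ‖μ‖ with hb
      set C := ‖c‖ with hC
      have hC0 : 0 < C := norm_pos_iff.2 hc
      set a : ℕ → ℝ := fun n => (n : ℝ)⁻¹ * (b ^ n * C) with ha
      have apos : ∀ n : ℕ, 1 ≤ n → 0 < a n := by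
        intro n hn
        have : (0:ℝ) < n := by exact_mod_cast hn
        have hb0 : (0:ℝ) < b := lt_trans one_pos hμ
        positivity
      set q : ℝ := (1 + b) / 2 with hqdef
      have hq1 : 1 < q := by rw [hqdef]; linarith
      have hqb : q < b := by rw [hqdef]; linarith
      set N : ℕ := ⌈q / (b - q)⌉₊ + 1 with hN
      have hN1 : 1 ≤ N := Nat.le_add_left 1 _
      have hstep : ∀ n : ℕ, N ≤ n → q * a n ≤ a (n + 1) := by
        intro n hn
        have hn1 : 1 ≤ n := le_trans hN1 hn
        have hnR : (0:ℝ) < n := by exact_mod_cast hn1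
        have hb0 : (0:ℝ) < b := lt_trans one_pos hμ
        have hbq : (0:ℝ) < b - q := by linarith
        have hqn : q ≤ n * (b - q) := by
          have h1 : q / (b - q) ≤ (N : ℝ) := by
            calc q / (b - q) ≤ (⌈q / (b - q)⌉₊ : ℝ) := Nat.le_ceil _
              _ ≤ (N : ℝ) := by exact_mod_cast Nat.le_succ _
          have h2 : (N : ℝ) ≤ n := by exact_mod_cast hn
          have := le_trans h1 h2
          calc q = (q / (b - q)) * (b - q) := by field_simp
            _ ≤ (n : ℝ) * (b - q) := by
                apply mul_le_mul_of_nonneg_right this (le_of_lt hbq)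
        -- q * (n+1) ≤ b * n
        have hkey : q * ((n : ℝ) + 1) ≤ b * n := by nlinarith
        simp only [ha]
        push_cast
        rw [pow_succ]
        have hn1R : (0:ℝ) < (n : ℝ) + 1 := by linarith
        have hbnC : (0:ℝ) < b ^ n * C := by positivity
        have hmul := mul_le_mul_of_nonneg_left hkey (le_of_lt hbnC)
        calc q * ((n : ℝ)⁻¹ * (b ^ n * C)) = (q * (b ^ n * C)) / n := by ring
          _ ≤ (b ^ n * b * C) / ((n : ℝ) + 1) := by
              rw [div_le_div_iff₀ hnR hn1R]; nlinarith
          _ = ((n : ℝ) + 1)⁻¹ * (b ^ n * b * C) := by ring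
      have hmono : ∀ k m : ℕ, N ≤ k → k ≤ m → a k ≤ a m := by
        intro k m hk hkm
        induction m, hkm using Nat.le_induction with
        | base => exact le_rfl
        | succ m hkm ih =>
          have hNm : N ≤ m := le_trans hk hkm
          have h1 := hstep m hNm
          have h2 : a m ≤ q * a m := le_mul_of_one_le_left (le_of_lt (apos m (le_trans hN1 hNm))) (le_of_lt hq1)
          exact le_trans ih (le_trans h2 h1)
      have hgrow : ∀ d : ℕ, q ^ d * a N ≤ a (N + d) := by
        intro d
        induction d with
        | zero => simp
        | succ d ih =>
          have h1 := hstep (N + d) (Nat.le_add_right _ _)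
          calc q ^ (d + 1) * a N = q * (q ^ d * a N) := by ring
            _ ≤ q * a (N + d) := by
                apply mul_le_mul_of_nonneg_left ih (by linarith)
            _ ≤ a (N + d + 1) := h1
      -- bound for the first N terms
      set M : ℝ := (Finset.Icc 1 N).sup' ⟨N, by simp [hN1]⟩ a with hM
      have hMle : ∀ k : ℕ, 1 ≤ k → k ≤ N → a k ≤ M :=
        fun k h1 h2 => Finset.le_sup' a (Finset.mem_Icc.2 ⟨h1, h2⟩)
      obtain ⟨d, hd⟩ := pow_unbounded_of_one_lt (M / a N) hq1
      set m : ℕ := N + d with hm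
      have hNm : N ≤ m := Nat.le_add_right _ _
      have hMam : M < a m := by
        have hαN := apos N hN1
        have : M < q ^ d * a N := by
          rw [div_lt_iff₀ hαN] at hd; linarith
        exact lt_of_lt_of_le this (hgrow d)
      have key : ∀ k : ℕ, 1 ≤ k → a k ≤ a m ∨ q * a m ≤ a k := by
        intro k hk
        rcases le_or_gt k N with h | h
        · exact Or.inl (le_of_lt (lt_of_le_of_lt (hMle k hk h) hMam))
        · rcases le_or_gt k m with h2 | h2
          · exact Or.inl (hmono k m (le_of_lt h) h2)
          · right
            have h3 : m + 1 ≤ k := h2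
            have h4 := hstep m hNm
            have h5 := hmono (m + 1) k (le_trans hNm (Nat.le_succ _)) h3
            linarith
      have ham : 0 < a m := apos m (le_trans hN1 hNm)
      set r : ℝ := (1 + q) / 2 * a m with hr
      set ρ : ℝ := (q - 1) / 2 * a m with hρ
      have hρ0 : 0 < ρ := by
        have h1 : 0 < (q - 1) / 2 := by linarith
        rw [hρ]; exact mul_pos h1 ham
      have hr0 : 0 < r := by
        have h1 : 0 < (1 + q) / 2 := by linarith
        rw [hr]; exact mul_pos h1 ham
      intro hd2
      obtain ⟨z, hz, hdz⟩ := Metric.mem_closure_iff.1 (hd2 ((r : ℝ) : ℂ)) ρ hρ0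
      obtain ⟨k, hk, hke⟩ := hnorm z hz
      have hak : a k = (k : ℝ)⁻¹ * (b ^ k * C) := rfl
      rw [← hak] at hke
      have hrz : ρ ≤ dist ((r : ℝ) : ℂ) z := by
        have hnr : ‖((r : ℝ) : ℂ)‖ = r := by
          rw [Complex.norm_real, Real.norm_eq_abs, abs_of_pos hr0]
        have hineq : |r - a k| ≤ dist ((r : ℝ) : ℂ) z := by
          rw [dist_eq_norm]
          calc |r - a k| = |‖((r : ℝ) : ℂ)‖ - ‖z‖| := by rw [hnr, hke]
            _ ≤ ‖((r : ℝ) : ℂ) - z‖ := abs_norm_sub_norm_le _ _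
        refine le_trans ?_ hineq
        have hram : r - a m = ρ := by rw [hr, hρ]; ring
        have hqam : q * a m - r = ρ := by rw [hr, hρ]; ring
        rcases key k hk with hcase | hcase
        · have h6 : ρ ≤ r - a k := by linarith
          exact le_trans h6 (le_abs_self _)
        · have h6 : ρ ≤ a k - r := by linarith
          calc ρ ≤ a k - r := h6
            _ ≤ |a k - r| := le_abs_self _
            _ = |r - a k| := abs_sub_comm _ _
      linarith

end AuxOrbit

section AuxOp
variable {H : Type*} [NormedAddCommGroup H] [NormedSpace ℂ H] [CompleteSpace H]

variable {H : Type*} [NormedAddCommGroup H] [NormedSpace ℂ H] [CompleteSpace H]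

lemma isUnit_of_bij (S : H →L[ℂ] H) (hker : LinearMap.ker (S : H →ₗ[ℂ] H) = ⊥)
    (hran : LinearMap.range (S : H →ₗ[ℂ] H) = ⊤) : IsUnit S := by
  set e := ContinuousLinearEquiv.ofBijective S hker hran with he
  have hce : (e : H →L[ℂ] H) = S := ContinuousLinearEquiv.coe_ofBijective S hker hran
  refine ⟨⟨S, (e.symm : H →L[ℂ] H), ?_, ?_⟩, rfl⟩
  · ext y
    show S ((e.symm : H →L[ℂ] H) y) = y
    rw [← hce]
    exact e.apply_symm_apply y
  · ext y
    show (e.symm : H →L[ℂ] H) (S y) = y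
    rw [← hce]
    exact e.symm_apply_apply y

lemma boundedBelow_of_isUnit [Nontrivial H] (S : H →L[ℂ] H) (h : IsUnit S) :
    IsBoundedBelow S := by
  obtain ⟨u, rfl⟩ := h
  set R : H →L[ℂ] H := ↑u⁻¹ with hR
  have hRy : ∀ y : H, R ((u : H →L[ℂ] H) y) = y := by
    intro y
    have : (R * (u : H →L[ℂ] H)) = 1 := u.inv_mul
    calc R ((u : H →L[ℂ] H) y) = (R * (u : H →L[ℂ] H)) y := rfl
      _ = y := by rw [this]; rfl
  have hR0 : R ≠ 0 := by
    intro h0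
    obtain ⟨y, hy⟩ := exists_ne (0 : H)
    have := hRy y
    rw [h0] at this
    exact hy (by simpa using this.symm)
  have hRn : 0 < ‖R‖ := norm_pos_iff.2 hR0
  refine ⟨‖R‖⁻¹, inv_pos.2 hRn, fun x => ?_⟩
  have h1 : ‖x‖ ≤ ‖R‖ * ‖(u : H →L[ℂ] H) x‖ := by
    calc ‖x‖ = ‖R ((u : H →L[ℂ] H) x)‖ := by rw [hRy]
      _ ≤ ‖R‖ * ‖(u : H →L[ℂ] H) x‖ := R.le_opNorm _
  rw [inv_mul_le_iff₀ hRn]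
  linarith

lemma ker_eq_bot_of_boundedBelow (S : H →L[ℂ] H) (h : IsBoundedBelow S) :
    LinearMap.ker (S : H →ₗ[ℂ] H) = ⊥ := by
  obtain ⟨c, hc, hb⟩ := h
  rw [LinearMap.ker_eq_bot']
  intro x hx
  have h1 := hb x
  rw [show S x = 0 from hx, norm_zero] at h1
  have h2 : ‖x‖ ≤ 0 := by
    by_contra h3
    push_neg at h3
    nlinarith
  rw [← norm_le_zero_iff]
  exact h2

lemma isClosed_range_of_boundedBelow (S : H →L[ℂ] H) (h : IsBoundedBelow S) :
    IsClosed (LinearMap.range (S : H →ₗ[ℂ] H) : Set H) := by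
  obtain ⟨c, hc, hb⟩ := h
  have hanti : AntilipschitzWith (⟨c⁻¹, by positivity⟩ : NNReal) S := by
    apply S.antilipschitz_of_bound
    intro x
    have := hb x
    change ‖x‖ ≤ c⁻¹ * ‖S x‖
    rw [inv_mul_eq_div, le_div_iff₀ hc]
    linarith [hb x]
  rw [LinearMap.coe_range]
  exact hanti.isClosed_range S.uniformContinuous

lemma range_eq_top_of_dense_closed (S : H →L[ℂ] H)
    (hd : Dense ((LinearMap.range (S : H →ₗ[ℂ] H) : Submodule ℂ H) : Set H))
    (hc : IsClosed ((LinearMap.range (S : H →ₗ[ℂ] H) : Submodule ℂ H) : Set H)) :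
    LinearMap.range (S : H →ₗ[ℂ] H) = ⊤ := by
  have h1 : ((LinearMap.range (S : H →ₗ[ℂ] H) : Submodule ℂ H) : Set H) = Set.univ := by
    rw [← hc.closure_eq]
    exact hd.closure_eq
  rw [← Submodule.top_coe (R := ℂ) (M := H)] at h1
  exact SetLike.coe_injective h1


end AuxOp

section AuxDense
variable {H : Type*} [NormedAddCommGroup H] [InnerProductSpace ℂ H] [CompleteSpace H]


lemma dense_range_of_cesaro (T : H →L[ℂ] H) (hT : CesaroHypercyclic T) (μ : ℂ) :
    Dense ((LinearMap.range ((T - μ • 1 : H →L[ℂ] H) : H →ₗ[ℂ] H) : Submodule ℂ H) : Set H) := by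
  by_contra hnd
  obtain ⟨x, hx⟩ := hT
  set A := T - μ • 1 with hA
  set K := (LinearMap.range (A : H →ₗ[ℂ] H)).topologicalClosure with hK
  have hKT : K ≠ ⊤ := by
    intro h
    apply hnd
    have h2 : closure ((LinearMap.range (A : H →ₗ[ℂ] H) : Submodule ℂ H) : Set H) = (K : Set H) := rfl
    rw [Dense]
    intro y
    rw [h2, h, Submodule.top_coe]
    trivial
  have hKbot : Kᗮ ≠ ⊥ := fun h => hKT (Submodule.orthogonal_eq_bot_iff.1 h)
  obtain ⟨f, hfK, hf0⟩ := (Submodule.ne_bot_iff _).1 hKbot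
  set φ : H →L[ℂ] ℂ := innerSL ℂ f with hφ
  have hφA : ∀ y : H, φ (A y) = 0 := by
    intro y
    have h1 : A y ∈ K := Submodule.le_topologicalClosure _ (LinearMap.mem_range_self (A : H →ₗ[ℂ] H) y)
    have h2 : ⟪A y, f⟫_ℂ = 0 := (Submodule.mem_orthogonal _ _).1 hfK (A y) h1
    show ⟪f, A y⟫_ℂ = 0
    exact inner_eq_zero_symm.1 h2
  have hφT : ∀ y : H, φ (T y) = μ * φ y := by
    intro y
    have h1 : A y = T y - μ • y := by
      rw [hA]; simp [ContinuousLinearMap.sub_apply, ContinuousLinearMap.smul_apply]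
    have h2 := hφA y
    rw [h1, map_sub, map_smul] at h2
    have : φ (T y) - μ * φ y = 0 := by simpa using h2
    linear_combination this
  have hpow : ∀ (n : ℕ) (y : H), φ ((T ^ n) y) = μ ^ n * φ y := by
    intro n
    induction n with
    | zero => intro y; simp
    | succ n ih =>
      intro y
      rw [pow_succ, ContinuousLinearMap.mul_apply, ih (T y), hφT y, pow_succ]
      ring
  -- the image of the dense orbit under φ is dense
  apply orbit_scalar_not_dense μ (φ x)
  rw [Metric.dense_iff]
  intro z ε hε
  have hff : ⟪f, f⟫_ℂ ≠ 0 := fun h => hf0 (inner_self_eq_zero.1 h)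
  set y₀ : H := (z / ⟪f, f⟫_ℂ) • f with hy₀
  have hφy₀ : φ y₀ = z := by
    rw [hy₀, map_smul]
    show z / ⟪f, f⟫_ℂ * ⟪f, f⟫_ℂ = z
    field_simp
  set δ : ℝ := ε / (‖φ‖ + 1) with hδ
  have hδ0 : 0 < δ := by
    apply div_pos hε; positivity
  obtain ⟨s, hs, hds⟩ := Metric.mem_closure_iff.1 (hx y₀) δ hδ0
  obtain ⟨n, hn, rfl⟩ := hs
  refine ⟨φ (((n : ℂ))⁻¹ • (T ^ n) x), ?_, ⟨n, hn, ?_⟩⟩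
  · rw [Metric.mem_ball, dist_comm, dist_eq_norm, ← hφy₀, ← map_sub]
    calc ‖φ (y₀ - ((n : ℂ))⁻¹ • (T ^ n) x)‖ ≤ ‖φ‖ * ‖y₀ - ((n : ℂ))⁻¹ • (T ^ n) x‖ :=
          φ.le_opNorm _
      _ ≤ ‖φ‖ * δ := by
          apply mul_le_mul_of_nonneg_left _ (norm_nonneg φ)
          rw [← dist_eq_norm]
          exact le_of_lt hds
      _ < ε := by
          rw [hδ]
          have h1 : ‖φ‖ / (‖φ‖ + 1) < 1 := by
            rw [div_lt_one (by positivity)]; linarith [norm_nonneg φ]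
          calc ‖φ‖ * (ε / (‖φ‖ + 1)) = ‖φ‖ / (‖φ‖ + 1) * ε := by ring
            _ < 1 * ε := by exact mul_lt_mul_of_pos_right h1 hε
            _ = ε := one_mul ε
  · rw [map_smul, hpow n x]
    rfl

end AuxDense

variable {H : Type*} [NormedAddCommGroup H] [InnerProductSpace ℂ H] [CompleteSpace H]
  [TopologicalSpace.SeparableSpace H]

theorem cesaroHypercyclic_aWeylsTheorem_iff
    (hinf : ¬ FiniteDimensional ℂ H) (T : H →L[ℂ] H) (hT : CesaroHypercyclic T) :
    AWeylsTheorem T ↔ pi00 T = ∅ := by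
  have hnt : Nontrivial H := by
    by_contra h
    rw [not_nontrivial_iff_subsingleton] at h
    exact hinf (Module.finite_of_rank_eq_zero (by rw [rank_subsingleton']))
  -- every T - μ has dense range
  have hdr : ∀ μ : ℂ, Dense ((LinearMap.range ((T - μ • 1 : H →L[ℂ] H) : H →ₗ[ℂ] H) : Submodule ℂ H) : Set H) :=
    dense_range_of_cesaro T hT
  -- spectrum membership
  have hspec : ∀ μ : ℂ, μ ∈ spectrum ℂ T ↔ ¬ IsUnit (T - μ • 1) := by
    intro μ
    rw [spectrum.mem_iff, Algebra.algebraMap_eq_smul_one]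
    constructor
    · intro h1 h2
      exact h1 (by simpa [neg_sub] using h2.neg)
    · intro h1 h2
      exact h1 (by simpa [neg_sub] using h2.neg)
  -- bounded below implies unit (using density)
  have hBBunit : ∀ μ : ℂ, IsBoundedBelow (T - μ • 1) → IsUnit (T - μ • 1) := by
    intro μ hbb
    exact isUnit_of_bij _ (ker_eq_bot_of_boundedBelow _ hbb)
      (range_eq_top_of_dense_closed _ (hdr μ) (isClosed_range_of_boundedBelow _ hbb))
  -- approximate point spectrum = spectrum
  have hsa : approxSpectrum T = spectrum ℂ T := by
    ext μ
    rw [hspec μ]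
    constructor
    · intro h1 h2
      exact h1 (boundedBelow_of_isUnit _ h2)
    · intro h1 h2
      exact h1 (hBBunit μ h2)
  -- σ_a \ σ_ea = ∅
  have hea : approxSpectrum T \ essApproxSpectrum T = ∅ := by
    rw [Set.eq_empty_iff_forall_notMem]
    rintro μ ⟨hμa, hμe⟩
    rw [essApproxSpectrum, Set.mem_setOf_eq, not_not] at hμe
    obtain ⟨⟨hclosed, -⟩, hind⟩ := hμe
    have hran : LinearMap.range ((T - μ • 1 : H →L[ℂ] H) : H →ₗ[ℂ] H) = ⊤ :=
      range_eq_top_of_dense_closed _ (hdr μ) hclosed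
    have hq0 : Module.rank ℂ (H ⧸ LinearMap.range ((T - μ • 1 : H →L[ℂ] H) : H →ₗ[ℂ] H)) = 0 := by
      haveI : Subsingleton (H ⧸ LinearMap.range ((T - μ • 1 : H →L[ℂ] H) : H →ₗ[ℂ] H)) :=
        Submodule.Quotient.subsingleton_iff.2 hran
      exact rank_subsingleton' _ _
    have hk0 : Module.rank ℂ (LinearMap.ker ((T - μ • 1 : H →L[ℂ] H) : H →ₗ[ℂ] H)) = 0 := by
      rw [IndexLE0, hq0, le_zero_iff] at hind
      exact hind
    have hker : LinearMap.ker ((T - μ • 1 : H →L[ℂ] H) : H →ₗ[ℂ] H) = ⊥ := Submodule.rank_eq_zero.1 hk0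
    have hunit : IsUnit (T - μ • 1) := isUnit_of_bij _ hker hran
    exact hμa (boundedBelow_of_isUnit _ hunit)
  -- π₀₀ = π₀₀ᵃ
  have hpi : pi00 T = pi00a T := by
    rw [pi00, pi00a, hsa]
  rw [AWeylsTheorem, hea, hpi, eq_comm]
end

section
/- Let H be a complex separable infinite-dimensional Hilbert space and T a bounded linear operator on H. If T is Cesàro-hypercyclic, then the Weyl spectrum and the essential approximate point spectrum of T coincide: σ_w(T) = σ_ea(T). -/
open Filter Topology

variable {H : Type*} [NormedAddCommGroup H] [InnerProductSpace ℂ H] [CompleteSpace H]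
  [TopologicalSpace.SeparableSpace H]

open scoped InnerProductSpace in
/-- Key lemma: a Cesàro-hypercyclic operator has `T - lam` with dense range for every `lam`. -/
lemma dense_range_of_cesaroHypercyclic (T : H →L[ℂ] H) (hT : CesaroHypercyclic T) (lam : ℂ) :
    Dense (LinearMap.range ((T - lam • 1 : H →L[ℂ] H) : H →ₗ[ℂ] H) : Set H) := by
  rw [Submodule.dense_iff_topologicalClosure_eq_top, Submodule.topologicalClosure_eq_top_iff,
    Submodule.eq_bot_iff]
  intro f hf
  by_contra hf0
  obtain ⟨x, hx⟩ := hT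
  set D : Set H := {y : H | ∃ n : ℕ, 1 ≤ n ∧ y = ((n : ℂ))⁻¹ • (T ^ n) x} with hD
  set φ : H →L[ℂ] ℂ := innerSL ℂ f with hφ
  have hTf : ∀ y : H, φ (T y) = lam * φ y := by
    intro y
    have h1 : ((T - lam • 1) y) ∈ LinearMap.range ((T - lam • 1 : H →L[ℂ] H) : H →ₗ[ℂ] H) :=
      LinearMap.mem_range_self _ y
    have h2 : ⟪(T - lam • 1) y, f⟫_ℂ = 0 :=
      (Submodule.mem_orthogonal _ f).mp hf _ h1
    have h3 : ⟪f, (T - lam • 1) y⟫_ℂ = 0 := by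
      rw [← inner_conj_symm, h2, map_zero]
    have h4 : (T - lam • 1) y = T y - lam • y := by
      simp [ContinuousLinearMap.sub_apply, ContinuousLinearMap.smul_apply]
    rw [h4, inner_sub_right, inner_smul_right, sub_eq_zero] at h3
    simpa [hφ] using h3
  have hpow : ∀ n : ℕ, φ ((T ^ n) x) = lam ^ n * φ x := by
    intro n
    induction n with
    | zero => simp
    | succ n ih =>
      have : (T ^ (n + 1)) x = T ((T ^ n) x) := by
        rw [pow_succ'] ; rfl
      rw [this, hTf, ih, pow_succ']
      ring
  set c : ℂ := φ x with hc
  -- elements of φ '' D have the explicit form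
  have hform : ∀ s ∈ φ '' D, ∃ n : ℕ, 1 ≤ n ∧ s = ((n : ℂ))⁻¹ * lam ^ n * c := by
    rintro s ⟨y, ⟨n, hn, rfl⟩, rfl⟩
    refine ⟨n, hn, ?_⟩
    rw [map_smul, hpow]
    simp [smul_eq_mul]
    ring
  -- φ '' D is dense in ℂ
  have hsurj : Function.Surjective φ := by
    intro z
    refine ⟨(z / ⟪f, f⟫_ℂ) • f, ?_⟩
    have hff : ⟪f, f⟫_ℂ ≠ 0 := inner_self_ne_zero.mpr hf0
    simp only [hφ, innerSL_apply_apply, inner_smul_right]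
    field_simp
  have hdense : Dense (φ '' D) := by
    rw [dense_iff_closure_eq]
    apply Set.eq_univ_of_univ_subset
    calc (Set.univ : Set ℂ) = φ '' (closure D) := by
          rw [hx.closure_eq, Set.image_univ, hsurj.range_eq]
      _ ⊆ closure (φ '' D) := image_closure_subset_closure_image φ.continuous
  by_cases hcase : ‖lam‖ ≤ 1 ∨ c = 0
  · -- all elements of φ '' D are bounded in norm by ‖c‖
    have hbdd : ∀ s ∈ φ '' D, ‖s‖ ≤ ‖c‖ := by
      intro s hs
      obtain ⟨n, hn, rfl⟩ := hform s hs
      rcases hcase with hl | hc0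
      · have h1 : ‖((n : ℂ))⁻¹‖ ≤ 1 := by
          rw [norm_inv]
          refine inv_le_one_of_one_le₀ ?_
          simpa using (Nat.one_le_cast (α := ℝ)).mpr hn
        have h2 : ‖lam ^ n‖ ≤ 1 := by
          rw [norm_pow]; exact pow_le_one₀ (norm_nonneg _) hl
        calc ‖((n : ℂ))⁻¹ * lam ^ n * c‖ = ‖((n : ℂ))⁻¹‖ * ‖lam ^ n‖ * ‖c‖ := by
              rw [norm_mul, norm_mul]
          _ ≤ 1 * 1 * ‖c‖ := by
              gcongr
          _ = ‖c‖ := by ring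
      · simp [hc0]
    have hz : ((‖c‖ + 1 : ℝ) : ℂ) ∈ closure (φ '' D) := by
      rw [hdense.closure_eq]; trivial
    rw [Metric.mem_closure_iff] at hz
    obtain ⟨s, hsD, hs⟩ := hz (1 / 2) (by norm_num)
    have h1 : ‖((‖c‖ + 1 : ℝ) : ℂ)‖ = ‖c‖ + 1 := by
      rw [Complex.norm_real, Real.norm_eq_abs, abs_of_nonneg (by positivity)]
    have h2 : ‖s‖ ≤ ‖c‖ := hbdd s hsD
    have h3 : ‖((‖c‖ + 1 : ℝ) : ℂ)‖ - ‖s‖ ≤ dist ((‖c‖ + 1 : ℝ) : ℂ) s := by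
      rw [dist_eq_norm]; exact norm_sub_norm_le _ _
    linarith
  · push_neg at hcase
    obtain ⟨hl, hc0⟩ := hcase
    set m : ℝ := (‖lam‖ - 1) * ‖c‖ with hm
    have hm0 : 0 < m := by
      have : 0 < ‖c‖ := norm_pos_iff.mpr hc0
      have : 0 < ‖lam‖ - 1 := by linarith
      positivity
    have hbdd : ∀ s ∈ φ '' D, m ≤ ‖s‖ := by
      intro s hs
      obtain ⟨n, hn, rfl⟩ := hform s hs
      have hn0 : (0 : ℝ) < n := by exact_mod_cast hn
      have hbern : (n : ℝ) * (‖lam‖ - 1) ≤ ‖lam‖ ^ n := by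
        have h := one_add_mul_le_pow (a := ‖lam‖ - 1) (by linarith) n
        have h1 : (1 : ℝ) + (‖lam‖ - 1) = ‖lam‖ := by ring
        rw [h1] at h
        linarith
      have hkey : ‖lam‖ - 1 ≤ (n : ℝ)⁻¹ * ‖lam‖ ^ n := by
        rw [inv_mul_eq_div, le_div_iff₀ hn0]
        linarith
      calc m = (‖lam‖ - 1) * ‖c‖ := hm
        _ ≤ ((n : ℝ)⁻¹ * ‖lam‖ ^ n) * ‖c‖ := by
            gcongr
        _ = ‖((n : ℂ))⁻¹ * lam ^ n * c‖ := by
            rw [norm_mul, norm_mul, norm_inv, norm_pow]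
            simp
    have hz : (0 : ℂ) ∈ closure (φ '' D) := by
      rw [hdense.closure_eq]; trivial
    rw [Metric.mem_closure_iff] at hz
    obtain ⟨s, hsD, hs⟩ := hz m hm0
    have : m ≤ ‖s‖ := hbdd s hsD
    rw [dist_eq_norm, zero_sub, norm_neg] at hs
    linarith

theorem cesaroHypercyclic_weylSpectrum_eq_essApproxSpectrum
    (hinf : ¬ FiniteDimensional ℂ H) (T : H →L[ℂ] H) (hT : CesaroHypercyclic T) :
    weylSpectrum T = essApproxSpectrum T := by
  ext lam
  simp only [weylSpectrum, essApproxSpectrum, Set.mem_setOf_eq, not_iff_not]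
  constructor
  · rintro ⟨⟨husf, hlsf⟩, hrank⟩
    exact ⟨husf, le_of_eq hrank⟩
  · rintro ⟨husf, hind⟩
    have hd := dense_range_of_cesaroHypercyclic T hT lam
    have htop : LinearMap.range ((T - lam • 1 : H →L[ℂ] H) : H →ₗ[ℂ] H) = ⊤ := by
      apply SetLike.coe_injective
      rw [Submodule.top_coe, ← husf.1.closure_eq, hd.closure_eq]
    have hsub : Subsingleton (H ⧸ LinearMap.range ((T - lam • 1 : H →L[ℂ] H) : H →ₗ[ℂ] H)) :=
      Submodule.Quotient.subsingleton_iff.mpr htop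
    have hq0 : Module.rank ℂ (H ⧸ LinearMap.range ((T - lam • 1 : H →L[ℂ] H) : H →ₗ[ℂ] H)) = 0 :=
      rank_subsingleton' _ _
    have hk0 : Module.rank ℂ (LinearMap.ker ((T - lam • 1 : H →L[ℂ] H) : H →ₗ[ℂ] H)) = 0 :=
      le_antisymm (hq0 ▸ hind) zero_le
    have hfdq : FiniteDimensional ℂ (H ⧸ LinearMap.range ((T - lam • 1 : H →L[ℂ] H) : H →ₗ[ℂ] H)) :=
      FiniteDimensional.of_rank_eq_zero hq0
    exact ⟨⟨husf, husf.1, hfdq⟩, hk0.trans hq0.symm⟩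
end

section
/- Let H be a complex separable infinite-dimensional Hilbert space and T a bounded linear operator on H. Then there exists a vector x ∈ H such that the orbit {M_n(T)x : n ≥ 1} of the arithmetic means is dense in H if and only if there exists a vector y ∈ H such that the set {n⁻¹ Tⁿ y : n ≥ 1} is dense in H, where M_n(T) = (I + T + T² + ⋯ + Tⁿ⁻¹)/n. -/
open Filter Topology

variable {H : Type*} [NormedAddCommGroup H] [InnerProductSpace ℂ H] [CompleteSpace H]
  [TopologicalSpace.SeparableSpace H]

open scoped InnerProductSpace

set_option linter.unusedSectionVars false

/-- Tail of a dense orbit is dense. -/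
private lemma tail_dense' [Nontrivial H] {f : ℕ → H}
    (hd : Dense {y : H | ∃ n : ℕ, 1 ≤ n ∧ y = f n}) (N : ℕ) :
    Dense {y : H | ∃ n : ℕ, N ≤ n ∧ y = f n} := by
  haveI : ∀ x : H, Filter.NeBot (nhdsWithin x {x}ᶜ) := fun x =>
    Module.punctured_nhds_neBot ℂ H x
  have hfin : (f '' Set.Iio N).Finite := (Set.finite_Iio N).image f
  have hsub : {y : H | ∃ n : ℕ, 1 ≤ n ∧ y = f n} \ (f '' Set.Iio N)
      ⊆ {y : H | ∃ n : ℕ, N ≤ n ∧ y = f n} := by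
    rintro y ⟨⟨n, hn1, rfl⟩, hnot⟩
    exact ⟨n, le_of_not_gt fun h => hnot ⟨n, h, rfl⟩, rfl⟩
  exact (hd.diff_finite hfin).mono hsub

/-- Removing an `O(1/n)` perturbation preserves density of the orbit. -/
private lemma dense_perturb' [Nontrivial H] {f : ℕ → H} (v : H)
    (hd : Dense {y : H | ∃ n : ℕ, 1 ≤ n ∧ y = f n + ((n : ℂ))⁻¹ • v}) :
    Dense {y : H | ∃ n : ℕ, 1 ≤ n ∧ y = f n} := by
  rw [Metric.dense_iff]
  intro z r hr
  obtain ⟨N, hN⟩ := exists_nat_gt (‖v‖ / (r / 2))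
  have htail := tail_dense' (f := fun n => f n + ((n : ℂ))⁻¹ • v) hd (max (N + 1) 1)
  rw [Metric.dense_iff] at htail
  obtain ⟨w, hwball, n, hn, rfl⟩ := htail z (r / 2) (by linarith)
  have hn1 : 1 ≤ n := le_trans (le_max_right _ _) hn
  have hnN : (N : ℝ) + 1 ≤ (n : ℝ) := by
    have : N + 1 ≤ n := le_trans (le_max_left _ _) hn
    exact_mod_cast this
  have hnpos : (0 : ℝ) < n := by positivity
  have hsmall : ‖((n : ℂ))⁻¹ • v‖ < r / 2 := by
    have h1 : ‖((n : ℂ))⁻¹ • v‖ = ‖v‖ / n := by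
      rw [norm_smul, norm_inv, Complex.norm_natCast, div_eq_inv_mul]
    rw [h1, div_lt_iff₀ hnpos]
    have h2 : ‖v‖ < N * (r / 2) := by
      rwa [div_lt_iff₀ (by linarith : (0:ℝ) < r / 2)] at hN
    have h3 : (N : ℝ) * (r / 2) ≤ n * (r / 2) := by nlinarith
    nlinarith
  have hdist : ‖f n + ((n : ℂ))⁻¹ • v - z‖ < r / 2 := by
    rw [Metric.mem_ball, dist_eq_norm] at hwball
    exact hwball
  refine ⟨f n, ?_, n, hn1, rfl⟩
  rw [Metric.mem_ball, dist_eq_norm]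
  calc ‖f n - z‖ = ‖(f n + ((n : ℂ))⁻¹ • v - z) + (-(((n : ℂ))⁻¹ • v))‖ := by congr 1; abel
    _ ≤ ‖f n + ((n : ℂ))⁻¹ • v - z‖ + ‖-(((n : ℂ))⁻¹ • v)‖ := norm_add_le _ _
    _ < r / 2 + r / 2 := by rw [norm_neg]; exact add_lt_add hdist hsmall
    _ = r := by ring

/-- `T - 1` has dense range whenever the Cesàro orbit of some vector is dense. -/
private lemma denseRange_sub_one {T : H →L[ℂ] H} {x : H}
    (hx : Dense {y : H | ∃ n : ℕ, 1 ≤ n ∧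
      y = (((n : ℂ))⁻¹ • ∑ i ∈ Finset.range n, T ^ i) x}) :
    DenseRange ((T - 1 : H →L[ℂ] H) : H → H) := by
  by_contra hnd
  set S : H →L[ℂ] H := T - 1 with hS
  set K : Submodule ℂ H := (LinearMap.range (S : H →ₗ[ℂ] H)).topologicalClosure with hK
  have hKc : IsClosed (K : Set H) := Submodule.isClosed_topologicalClosure _
  haveI : CompleteSpace K := hKc.completeSpace_coe
  have hKne : K ≠ ⊤ := by
    intro h
    apply hnd
    have : closure (Set.range (S : H → H)) = Set.univ := by
      have h1 : (Set.range (S : H → H)) = ((LinearMap.range (S : H →ₗ[ℂ] H) : Submodule ℂ H) : Set H) := by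
        ext w; simp [LinearMap.mem_range]
      rw [h1, ← Submodule.topologicalClosure_coe, ← hK, h]
      rfl
    rw [DenseRange, dense_iff_closure_eq]
    exact this
  have hbot : Kᗮ ≠ ⊥ := fun h => hKne (Submodule.orthogonal_eq_bot_iff.mp h)
  obtain ⟨v, hvK, hv0⟩ := Submodule.exists_mem_ne_zero_of_ne_bot hbot
  have hvS : ∀ w : H, ⟪v, S w⟫_ℂ = 0 := by
    intro w
    exact (Submodule.mem_orthogonal' K v).mp hvK _
      (Submodule.le_topologicalClosure _ (LinearMap.mem_range_self _ w))
  have hTw : ∀ w : H, ⟪v, T w⟫_ℂ = ⟪v, w⟫_ℂ := by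
    intro w
    have h1 : T w = S w + w := by simp [hS]
    rw [h1, inner_add_right, hvS, zero_add]
  have hTi : ∀ i : ℕ, ⟪v, (T ^ i) x⟫_ℂ = ⟪v, x⟫_ℂ := by
    intro i
    induction i with
    | zero => simp
    | succ i ih =>
      rw [pow_succ']
      rw [ContinuousLinearMap.mul_apply, hTw, ih]
  have hsub : {y : H | ∃ n : ℕ, 1 ≤ n ∧
      y = (((n : ℂ))⁻¹ • ∑ i ∈ Finset.range n, T ^ i) x} ⊆ {w : H | ⟪v, w⟫_ℂ = ⟪v, x⟫_ℂ} := by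
    rintro y ⟨n, hn, rfl⟩
    have hne : ((n : ℂ)) ≠ 0 := by exact_mod_cast Nat.one_le_iff_ne_zero.mp hn
    simp only [ContinuousLinearMap.smul_apply, ContinuousLinearMap.sum_apply, Set.mem_setOf_eq]
    rw [inner_smul_right, inner_sum]
    simp only [hTi]
    rw [Finset.sum_const, Finset.card_range, nsmul_eq_mul]
    field_simp
  have hCcl : IsClosed {w : H | ⟪v, w⟫_ℂ = ⟪v, x⟫_ℂ} :=
    isClosed_eq (continuous_const.inner continuous_id) continuous_const
  have : (Set.univ : Set H) ⊆ {w : H | ⟪v, w⟫_ℂ = ⟪v, x⟫_ℂ} := by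
    rw [← hx.closure_eq]
    exact hCcl.closure_subset_iff.mpr hsub
  have hxv : ⟪v, x + v⟫_ℂ = ⟪v, x⟫_ℂ := this (Set.mem_univ _)
  rw [inner_add_right, add_eq_left, inner_self_eq_zero] at hxv
  exact hv0 hxv

theorem cesaro_mean_orbit_dense_iff
    (hinf : ¬ FiniteDimensional ℂ H) (T : H →L[ℂ] H) :
    (∃ x : H, Dense {y : H | ∃ n : ℕ, 1 ≤ n ∧
        y = (((n : ℂ))⁻¹ • ∑ i ∈ Finset.range n, T ^ i) x}) ↔
      (∃ y : H, Dense {z : H | ∃ n : ℕ, 1 ≤ n ∧ z = ((n : ℂ))⁻¹ • (T ^ n) y}) := by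
  haveI : Nontrivial H := by
    by_contra h
    rw [not_nontrivial_iff_subsingleton] at h
    exact hinf inferInstance
  constructor
  · rintro ⟨x, hx⟩
    refine ⟨x, ?_⟩
    set S : H →L[ℂ] H := T - 1 with hS
    have hdr : DenseRange (S : H → H) := denseRange_sub_one hx
    have himg : Dense ((S : H → H) '' {y : H | ∃ n : ℕ, 1 ≤ n ∧
        y = (((n : ℂ))⁻¹ • ∑ i ∈ Finset.range n, T ^ i) x}) :=
      hdr.dense_image S.continuous hx
    have key : ∀ n : ℕ, S ((((n : ℂ))⁻¹ • ∑ i ∈ Finset.range n, T ^ i) x)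
        = ((n : ℂ))⁻¹ • (T ^ n) x + ((n : ℂ))⁻¹ • (-x) := by
      intro n
      have h1 : S * (∑ i ∈ Finset.range n, T ^ i) = T ^ n - 1 := by
        rw [hS]; exact mul_geom_sum T n
      have h2 : S ((∑ i ∈ Finset.range n, T ^ i) x) = (T ^ n) x - x := by
        have := congrArg (fun A : H →L[ℂ] H => A x) h1
        simpa using this
      rw [ContinuousLinearMap.smul_apply, map_smul, h2, smul_sub, smul_neg, sub_eq_add_neg]
    have heq : (S : H → H) '' {y : H | ∃ n : ℕ, 1 ≤ n ∧
        y = (((n : ℂ))⁻¹ • ∑ i ∈ Finset.range n, T ^ i) x}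
        = {y : H | ∃ n : ℕ, 1 ≤ n ∧
            y = (fun n : ℕ => ((n : ℂ))⁻¹ • (T ^ n) x) n + ((n : ℂ))⁻¹ • (-x)} := by
      ext w
      constructor
      · rintro ⟨u, ⟨n, hn, rfl⟩, rfl⟩
        exact ⟨n, hn, (key n).symm ▸ (key n)⟩
      · rintro ⟨n, hn, rfl⟩
        exact ⟨(((n : ℂ))⁻¹ • ∑ i ∈ Finset.range n, T ^ i) x, ⟨n, hn, rfl⟩, key n⟩
    rw [heq] at himg
    exact dense_perturb' (-x) himg
  · rintro ⟨y, hy⟩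
    refine ⟨(T - 1) y, ?_⟩
    set g : ℕ → H := fun n => (((n : ℂ))⁻¹ • ∑ i ∈ Finset.range n, T ^ i) ((T - 1) y) with hg
    have key : ∀ n : ℕ, g n + ((n : ℂ))⁻¹ • y = ((n : ℂ))⁻¹ • (T ^ n) y := by
      intro n
      have h1 : (∑ i ∈ Finset.range n, T ^ i) * (T - 1) = T ^ n - 1 := geom_sum_mul T n
      have h2 : (∑ i ∈ Finset.range n, T ^ i) ((T - 1) y) = (T ^ n) y - y := by
        have := congrArg (fun A : H →L[ℂ] H => A y) h1
        simpa using this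
      rw [hg]
      simp only [ContinuousLinearMap.smul_apply, h2, smul_sub]
      abel
    have hy' : Dense {w : H | ∃ n : ℕ, 1 ≤ n ∧ w = g n + ((n : ℂ))⁻¹ • y} := by
      have hseteq : {w : H | ∃ n : ℕ, 1 ≤ n ∧ w = g n + ((n : ℂ))⁻¹ • y}
          = {z : H | ∃ n : ℕ, 1 ≤ n ∧ z = ((n : ℂ))⁻¹ • (T ^ n) y} := by
        ext w
        simp only [Set.mem_setOf_eq]
        exact exists_congr fun n => and_congr_right fun _ => by rw [key n]
      rw [hseteq]
      exact hy
    exact dense_perturb' y hy'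
end
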